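/- Let 0 < a < b and let q > 1. Then ln( I(a,b) / G(a,b) ) ≤ ((b − a)/2) · H(a^q, b^q)^{−1/q}, i.e. I(a,b)/G(a,b) ≤ exp( ((b−a)/2) · ( (a^q + b^q) / (2 a^q b^q) )^{1/q} ). -/

import Mathlib

/-- Proposition 2: for `0 < a < b` and `q > 1`,
`ln (I(a,b) / G(a,b)) ≤ ((b−a)/2) · H(a^q, b^q)^{−1/q}`, where
`I(a,b) = (1/e)(b^b/a^a)^{1/(b−a)}`, `G(a,b) = √(ab)` and `H(x,y) = 2xy/(x+y)`. -/
theorem identric_over_geometric_estimate (a b q : ℝ) (ha : 0 < a) (hab : a < b)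
    (hq : 1 < q) :
    Real.log ((1 / Real.exp 1) * (b ^ b / a ^ a) ^ (1 / (b - a)) / Real.sqrt (a * b)) ≤
      ((b - a) / 2) * (2 * a ^ q * b ^ q / (a ^ q + b ^ q)) ^ (-(1 / q)) := by
  have hb : 0 < b := ha.trans hab
  have hba : 0 < b - a := sub_pos.mpr hab
  have hm : 0 < (a + b) / 2 := by positivity
  set La := Real.log a with hLa
  set Lb := Real.log b with hLb
  -- Step 0: compute the logarithm on the left.
  have hLHS : Real.log ((1 / Real.exp 1) * (b ^ b / a ^ a) ^ (1 / (b - a)) / Real.sqrt (a * b))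
      = -1 + (b * Lb - a * La) / (b - a) - (La + Lb) / 2 := by
    have hbb : Real.log (b ^ b / a ^ a) = b * Lb - a * La := by
      rw [Real.log_div (by positivity) (by positivity), Real.log_rpow hb, Real.log_rpow ha]
    rw [Real.log_div (by positivity) (by positivity : Real.sqrt (a * b) ≠ 0),
      Real.log_mul (by positivity) (by positivity),
      Real.log_rpow (by positivity), hbb,
      Real.log_sqrt (by positivity), Real.log_mul ha.ne' hb.ne',
      one_div, Real.log_inv, Real.log_exp]
    field_simp
    rfl
  rw [hLHS]
  -- Step 1: log b - log a bound via log x ≤ x - 1 at b/m and m/a, m = (a+b)/2.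
  have h1 : Real.log (b / ((a + b) / 2)) ≤ b / ((a + b) / 2) - 1 :=
    Real.log_le_sub_one_of_pos (by positivity)
  have h2 : Real.log (((a + b) / 2) / a) ≤ ((a + b) / 2) / a - 1 :=
    Real.log_le_sub_one_of_pos (by positivity)
  rw [Real.log_div hb.ne' hm.ne'] at h1
  rw [Real.log_div hm.ne' ha.ne'] at h2
  have hL' : 2 * a * (a + b) * (Lb - La) ≤ (b - a) * (3 * a + b) := by
    have hc : Lb - La ≤ (b / ((a + b) / 2) - 1) + (((a + b) / 2) / a - 1) := by linarith
    have heq : (b / ((a + b) / 2) - 1) + (((a + b) / 2) / a - 1)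
        = (b - a) * (3 * a + b) / (2 * a * (a + b)) := by
      field_simp
      ring
    rw [heq, le_div_iff₀ (by positivity)] at hc
    linarith [hc]
  -- Step 2: the key polynomial-in-logs inequality.
  have hkey4 : 4 * a * (b * Lb - a * La)
      ≤ (b - a) * (4 * a + 2 * a * La + 2 * a * Lb + (b - a)) := by nlinarith [hL']
  have step1 : -1 + (b * Lb - a * La) / (b - a) - (La + Lb) / 2 ≤ (b - a) / (4 * a) := by
    have hdiv : (b * Lb - a * La) / (b - a)
        ≤ (4 * a + 2 * a * La + 2 * a * Lb + (b - a)) / (4 * a) := by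
      rw [div_le_div_iff₀ hba (by positivity)]
      nlinarith [hkey4]
    have heq2 : (4 * a + 2 * a * La + 2 * a * Lb + (b - a)) / (4 * a)
        = 1 + (La + Lb) / 2 + (b - a) / (4 * a) := by
      field_simp
      ring
    rw [heq2] at hdiv
    linarith
  refine step1.trans ?_
  -- Step 3: (b-a)/(4a) ≤ ((b-a)/2) * R^(-(1/q)).
  have haq : (0:ℝ) < a ^ q := Real.rpow_pos_of_pos ha q
  have hbq : (0:ℝ) < b ^ q := Real.rpow_pos_of_pos hb q
  have hR : (0:ℝ) < 2 * a ^ q * b ^ q / (a ^ q + b ^ q) := by positivity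
  have hq0 : (0:ℝ) < q := by linarith
  have h2q : (2:ℝ) ≤ 2 ^ q := by
    calc (2:ℝ) = 2 ^ (1:ℝ) := (Real.rpow_one 2).symm
    _ ≤ 2 ^ q := Real.rpow_le_rpow_of_exponent_le one_le_two hq.le
  have hbase : (1 / (2 * a)) ^ q ≤ (2 * a ^ q * b ^ q / (a ^ q + b ^ q))⁻¹ := by
    have e1 : (1 / (2 * a)) ^ q = 1 / (2 ^ q * a ^ q) := by
      rw [Real.div_rpow zero_le_one (by positivity), Real.one_rpow,
        Real.mul_rpow (by norm_num) ha.le]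
    have e2 : (2 * a ^ q * b ^ q / (a ^ q + b ^ q))⁻¹
        = (a ^ q + b ^ q) / (2 * a ^ q * b ^ q) := by
      rw [inv_div]
    rw [e1, e2, div_le_div_iff₀ (by positivity) (by positivity)]
    have hfact : 2 * (a ^ q * b ^ q) ≤ 2 ^ q * (a ^ q * b ^ q) :=
      mul_le_mul_of_nonneg_right h2q (by positivity)
    have hfact2 : 2 ^ q * (a ^ q * b ^ q) ≤ 2 ^ q * (a ^ q * (a ^ q + b ^ q)) := by
      have : a ^ q * b ^ q ≤ a ^ q * (a ^ q + b ^ q) := by nlinarith [haq, hbq]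
      exact mul_le_mul_of_nonneg_left this (by positivity)
    nlinarith [hfact, hfact2]
  have hinv : 1 / (2 * a) ≤ ((2 * a ^ q * b ^ q / (a ^ q + b ^ q))⁻¹) ^ (1 / q) := by
    calc 1 / (2 * a) = ((1 / (2 * a)) ^ q) ^ (1 / q) := by
          rw [← Real.rpow_mul (by positivity), mul_one_div_cancel hq0.ne', Real.rpow_one]
        _ ≤ _ := Real.rpow_le_rpow (by positivity) hbase (by positivity)
  have hrw : (2 * a ^ q * b ^ q / (a ^ q + b ^ q)) ^ (-(1 / q))
      = ((2 * a ^ q * b ^ q / (a ^ q + b ^ q))⁻¹) ^ (1 / q) := by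
    rw [Real.rpow_neg hR.le, Real.inv_rpow hR.le]
  rw [hrw]
  have : (b - a) / (4 * a) = (b - a) / 2 * (1 / (2 * a)) := by ring
  rw [this]
  exact mul_le_mul_of_nonneg_left hinv (by linarith)
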